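/- Let v = ∏_{i≥0} 0·1^{2t_i+1}, where t_i is the Thue–Morse sequence. Then v contains no factor of the form x̄·x·x·x̄, where x is a nonempty binary word and x̄ is its letterwise complement. -/

import Mathlib

def tm (i : Nat) : Nat := (Nat.digits 2 i).sum % 2

/-- Block `0 1^(2 t_i+1)` of the word **v**. -/
def vBlock (i : Nat) : List Bool := [false] ++ List.replicate (2 * tm i + 1) true

def vPrefix (n : Nat) : List Bool := ((List.range n).map vBlock).flatten

/-- `L` is a factor of the infinite word **v**. -/
def IsFactorV (L : List Bool) : Prop := ∃ n, L <:+: vPrefix n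

namespace Stmt12Aux

open List

def blk (g : ℕ) : List Bool := false :: List.replicate g true

def W (G : List ℕ) : List Bool := (G.map blk).flatten

def vGood (G : List ℕ) : Prop := ∀ g ∈ G, g = 1 ∨ g = 3

lemma W_cons (g : ℕ) (G : List ℕ) : W (g :: G) = blk g ++ W G := by
  simp [W]

lemma count_blk_false (g : ℕ) : List.count false (blk g) = 1 := by
  simp [blk, List.count_replicate]

lemma count_blk_true (g : ℕ) : List.count true (blk g) = g := by
  simp [blk]

lemma prefix_split {α : Type*} {L A B : List α} (h : L <+: A ++ B) :
    L <+: A ∨ ∃ M, L = A ++ M ∧ M <+: B := by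
  rcases le_or_gt L.length A.length with hl | hl
  · exact Or.inl (List.prefix_of_prefix_length_le h (List.prefix_append A B) hl)
  · right
    have hA : A <+: L := List.prefix_of_prefix_length_le (List.prefix_append A B) h hl.le
    obtain ⟨M, rfl⟩ := hA
    refine ⟨M, rfl, ?_⟩
    obtain ⟨r, hr⟩ := h
    rw [List.append_assoc] at hr
    exact ⟨r, List.append_cancel_left hr⟩

lemma infix_split {α : Type*} {L A B : List α} (h : L <:+: A ++ B) :
    L <:+: A ∨ L <:+: B ∨ ∃ s M, L = s ++ M ∧ s ≠ [] ∧ s <:+ A ∧ M <+: B := by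
  induction A generalizing L with
  | nil => exact Or.inr (Or.inl (by simpa using h))
  | cons a A ih =>
    rw [List.cons_append, List.infix_cons_iff] at h
    rcases h with h | h
    · rcases L with _ | ⟨b, L'⟩
      · exact Or.inr (Or.inl List.nil_infix)
      · rw [List.cons_prefix_cons] at h
        obtain ⟨rfl, h'⟩ := h
        rcases prefix_split h' with h2 | ⟨M, rfl, hM⟩
        · exact Or.inl ((List.cons_prefix_cons.mpr ⟨rfl, h2⟩).isInfix)
        · exact Or.inr (Or.inr ⟨b :: A, M, by simp, List.cons_ne_nil _ _,
            List.suffix_refl _, hM⟩)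
    · rcases ih h with h | h | ⟨s, M, rfl, hs, hsA, hM⟩
      · exact Or.inl (h.trans (List.infix_cons (List.infix_refl A)))
      · exact Or.inr (Or.inl h)
      · exact Or.inr (Or.inr ⟨s, M, rfl, hs, hsA.trans (List.suffix_cons a A), hM⟩)

lemma pair_split {α : Type*} {c d : α} {A B : List α} (h : [c, d] <:+: A ++ B) :
    [c, d] <:+: A ∨ [c, d] <:+: B ∨ (A.getLast? = some c ∧ B.head? = some d) := by
  rcases infix_split h with h | h | ⟨s, M, hE, hs, hsA, hM⟩
  · exact Or.inl h
  · exact Or.inr (Or.inl h)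
  · rcases s with _ | ⟨e, s'⟩
    · exact absurd rfl hs
    · rcases s' with _ | ⟨f, s''⟩
      · -- s = [e], so e = c and M = [d]
        simp only [List.cons_append, List.nil_append] at hE
        injection hE with h1 h2
        subst h1
        refine Or.inr (Or.inr ⟨?_, ?_⟩)
        · obtain ⟨u, rfl⟩ := hsA
          exact List.getLast?_concat
        · rw [← h2] at hM
          obtain ⟨r, rfl⟩ := hM
          rfl
      · -- s has ≥ 2 elements, so s = [c, d] and M = []
        simp only [List.cons_append] at hE
        injection hE with h1 h2
        injection h2 with h2 h3
        subst h1; subst h2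
        have h4 : s'' = [] ∧ M = [] := by
          have := List.append_eq_nil_iff.mp h3.symm
          exact this
        obtain ⟨rfl, rfl⟩ := h4
        exact Or.inl (by simpa using hsA.isInfix)

lemma head?_W {G : List ℕ} {M : List Bool} (h : M <+: W G) (hne : M.head? = some true) :
    False := by
  cases G with
  | nil =>
    have : M = [] := by simpa [W] using h
    subst this; simp at hne
  | cons g G =>
    obtain ⟨r, hr⟩ := h
    cases M with
    | nil => simp at hne
    | cons b M' =>
      rw [W_cons] at hr
      have hb : b = false := by
        simpa [blk] using congrArg List.head? hr
      simp [hb] at hne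

lemma getLast?_replicate_true {j : ℕ} (hj : 1 ≤ j) :
    (List.replicate j true).getLast? = some true := by
  cases j with
  | zero => omega
  | succ k =>
    rw [List.replicate_succ']
    exact List.getLast?_concat

lemma getLast?_blk {g : ℕ} (hg : 1 ≤ g) : (blk g).getLast? = some true := by
  cases g with
  | zero => omega
  | succ k =>
    show (false :: List.replicate (k + 1) true).getLast? = some true
    rw [List.replicate_succ', ← List.cons_append]
    exact List.getLast?_concat

lemma count_pair (b : Bool) : List.count b [b, b] = 2 := by cases b <;> decide

/-- Main prefix lemma: invariants of prefixes of `W G`. -/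
lemma preL : ∀ (G : List ℕ), vGood G → ∀ M : List Bool, M <+: W G →
    (List.count false M ≤ List.count true M + 1) ∧
    (¬ [false, false] <:+: M) ∧
    ([true, true] <:+: M → List.count false M < List.count true M) := by
  intro G
  induction G with
  | nil =>
    intro _ M h
    have : M = [] := by simpa [W] using h
    subst this
    refine ⟨by simp, ?_, ?_⟩
    · intro hc; have := hc.sublist.length_le; simp at this
    · intro hc; have := hc.sublist.length_le; simp at this
  | cons g G ih =>
    intro hgood M h
    have hg13 : g = 1 ∨ g = 3 := hgood g List.mem_cons_self
    have hg : 1 ≤ g := by omega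
    have hgood' : vGood G := fun g' hm => hgood g' (List.mem_cons_of_mem _ hm)
    rw [W_cons] at h
    rcases prefix_split h with h | ⟨M', rfl, hM'⟩
    · -- M is a prefix of blk g
      have hf : List.count false M ≤ 1 := by
        have := (h.sublist).count_le false
        rwa [count_blk_false] at this
      refine ⟨by omega, ?_, ?_⟩
      · intro hc
        have h2 : 2 ≤ List.count false M := by
          have := (hc.sublist).count_le false
          rwa [count_pair] at this
        omega
      · intro hc
        have h2 : 2 ≤ List.count true M := by
          have := (hc.sublist).count_le true
          rwa [count_pair] at this
        omega
    · -- M = blk g ++ M'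
      obtain ⟨ih1, ih0, ih2⟩ := ih hgood' M' hM'
      rw [List.count_append, List.count_append, count_blk_false, count_blk_true]
      refine ⟨by omega, ?_, ?_⟩
      · intro hc
        rcases pair_split hc with hc | hc | ⟨hl, hh⟩
        · have h2 : 2 ≤ List.count false (blk g) := by
            have := (hc.sublist).count_le false
            rwa [count_pair] at this
          rw [count_blk_false] at h2; omega
        · exact ih0 hc
        · rw [getLast?_blk hg] at hl; simp at hl
      · intro hc
        rcases pair_split hc with hc | hc | ⟨hl, hh⟩
        · have h2 : 2 ≤ g := by
            have := (hc.sublist).count_le true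
            rwa [count_pair, count_blk_true] at this
          have hg3 : g = 3 := by omega
          omega
        · have := ih2 hc; omega
        · exact absurd hh (fun hh => head?_W hM' hh)

/-- Main infix lemma: invariants of factors of `W G`. -/
lemma infL : ∀ (G : List ℕ), vGood G → ∀ L : List Bool, L <:+: W G →
    (¬ [false, false] <:+: L) ∧
    ([true, true] <:+: L → List.count false L < List.count true L) := by
  intro G
  induction G with
  | nil =>
    intro _ L h
    have : L = [] := by simpa [W] using h
    subst this
    constructor
    · intro hc; have := hc.sublist.length_le; simp at this
    · intro hc; have := hc.sublist.length_le; simp at this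
  | cons g G ih =>
    intro hgood L h
    have hg13 : g = 1 ∨ g = 3 := hgood g List.mem_cons_self
    have hg : 1 ≤ g := by omega
    have hgood' : vGood G := fun g' hm => hgood g' (List.mem_cons_of_mem _ hm)
    rw [W_cons] at h
    rcases infix_split h with h | h | ⟨s, M, rfl, hs, hsA, hM⟩
    · -- L is an infix of blk g
      have hf : List.count false L ≤ 1 := by
        have := (h.sublist).count_le false
        rwa [count_blk_false] at this
      constructor
      · intro hc
        have h2 : 2 ≤ List.count false L := by
          have := (hc.sublist).count_le false
          rwa [count_pair] at this
        omega
      · intro hc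
        have h2 : 2 ≤ List.count true L := by
          have := (hc.sublist).count_le true
          rwa [count_pair] at this
        omega
    · exact ih hgood' L h
    · -- straddle: L = s ++ M, s nonempty suffix of blk g, M prefix of W G
      obtain ⟨p1, p0, p2⟩ := preL G hgood' M hM
      have hs' : s = blk g ∨ ∃ j, 1 ≤ j ∧ s = List.replicate j true := by
        rcases List.suffix_cons_iff.mp hsA with h' | h'
        · exact Or.inl h'
        · obtain ⟨j, hj, rfl⟩ := List.sublist_replicate_iff.mp h'.sublist
          refine Or.inr ⟨j, ?_, rfl⟩
          rcases Nat.eq_zero_or_pos j with rfl | hj'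
          · exact absurd rfl hs
          · exact hj'
      constructor
      · intro hc
        rcases pair_split hc with hc | hc | ⟨hl, hh⟩
        · have h2 : 2 ≤ List.count false s := by
            have := (hc.sublist).count_le false
            rwa [count_pair] at this
          rcases hs' with rfl | ⟨j, hj, rfl⟩
          · rw [count_blk_false] at h2; omega
          · simp [List.count_replicate] at h2
        · exact p0 hc
        · rcases hs' with rfl | ⟨j, hj, rfl⟩
          · rw [getLast?_blk hg] at hl; simp at hl
          · rw [getLast?_replicate_true hj] at hl; simp at hl
      · intro hc
        rcases pair_split hc with hc | hc | ⟨hl, hh⟩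
        · have h2 : 2 ≤ List.count true s := by
            have := (hc.sublist).count_le true
            rwa [count_pair] at this
          rcases hs' with rfl | ⟨j, hj, rfl⟩
          · rw [count_blk_true] at h2
            have hg3 : g = 3 := by omega
            rw [List.count_append, List.count_append, count_blk_false, count_blk_true]
            omega
          · simp only [List.count_append, List.count_replicate] at *
            simp at h2 ⊢
            omega
        · have := p2 hc
          rcases hs' with rfl | ⟨j, hj, rfl⟩
          · rw [List.count_append, List.count_append, count_blk_false, count_blk_true]
            omega
          · simp only [List.count_append, List.count_replicate]
            simp
            omega
        · exact absurd hh (fun hh => head?_W hM hh)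

lemma chain_or_pair : ∀ (L : List Bool), List.Chain' (· ≠ ·) L ∨ ∃ b, [b, b] <:+: L := by
  intro L
  induction L with
  | nil => exact Or.inl List.isChain_nil
  | cons a L ih =>
    cases L with
    | nil => exact Or.inl (List.isChain_singleton a)
    | cons b L' =>
      by_cases hab : a = b
      · exact Or.inr ⟨a, ⟨[], L', by simp [hab]⟩⟩
      · rcases ih with hc | ⟨c, hcc⟩
        · exact Or.inl (List.isChain_cons_cons.mpr ⟨hab, hc⟩)
        · exact Or.inr ⟨c, List.infix_cons hcc⟩

lemma balanced_alternating {G : List ℕ} (hG : vGood G) {L : List Bool}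
    (hL : L <:+: W G) (hbal : List.count false L = List.count true L) :
    List.Chain' (· ≠ ·) L := by
  obtain ⟨p0, p2⟩ := infL G hG L hL
  rcases chain_or_pair L with hc | ⟨b, hb⟩
  · exact hc
  · cases b
    · exact absurd hb p0
    · have := p2 hb; omega

end Stmt12Aux

theorem stmt12 (x : List Bool) (hx : x ≠ []) :
    ¬ IsFactorV ((List.map (fun b => !b) x) ++ x ++ x ++ (List.map (fun b => !b) x)) := by
  rintro ⟨n, hinf⟩
  -- rewrite vPrefix n as W of a good gap list
  have hW : vPrefix n = Stmt12Aux.W ((List.range n).map (fun i => 2 * tm i + 1)) := by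
    unfold vPrefix Stmt12Aux.W
    rw [List.map_map]
    congr 1
  have hGood : Stmt12Aux.vGood ((List.range n).map (fun i => 2 * tm i + 1)) := by
    intro g hg
    simp only [List.mem_map] at hg
    obtain ⟨i, _, rfl⟩ := hg
    have : tm i ≤ 1 := Nat.le_of_lt_succ (Nat.mod_lt _ (by norm_num))
    omega
  rw [hW] at hinf
  set y := List.map (fun b => !b) x with hy
  have hinj : Function.Injective (fun b : Bool => !b) := fun a b h => by
    cases a <;> cases b <;> simp_all
  have hy1 : List.count false y = List.count true x := by
    have := List.count_map_of_injective x (fun b => !b) hinj true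
    simpa using this
  have hy2 : List.count true y = List.count false x := by
    have := List.count_map_of_injective x (fun b => !b) hinj false
    simpa using this
  have hbal : List.count false (y ++ x ++ x ++ y) = List.count true (y ++ x ++ x ++ y) := by
    simp only [List.count_append]
    omega
  have hch : List.Chain' (· ≠ ·) (y ++ x ++ x ++ y) :=
    Stmt12Aux.balanced_alternating hGood hinf hbal
  obtain ⟨a, s, rfl⟩ := List.exists_cons_of_ne_nil hx
  have hxne : (a :: s) ≠ [] := List.cons_ne_nil a s
  set b := (a :: s).getLast hxne with hb
  have hlX : (a :: s).getLast? = some b := List.getLast?_eq_getLast hxne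
  have hlY : y.getLast? = some (!b) := by
    rw [hy, List.getLast?_map, hlX]; rfl
  rw [show y ++ (a :: s) ++ (a :: s) ++ y = y ++ ((a :: s) ++ ((a :: s) ++ y)) by
    simp [List.append_assoc]] at hch
  obtain ⟨_, hch2, hj1⟩ := List.isChain_append.mp hch
  obtain ⟨_, _, hj2⟩ := List.isChain_append.mp hch2
  have h1 : ¬ (!b) = a := by
    refine hj1 (!b) ?_ a ?_
    · simp [hlY]
    · simp
  have h2 : ¬ b = a := by
    refine hj2 b ?_ a ?_
    · simp [hlX]
    · simp
  cases a <;> cases b <;> simp_all
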